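/- The block extension functor E sends zigzag interval modules to block interval modules: for every zigzag interval ⟨b,d⟩_ZZ, there is an isomorphism E(I^{⟨b,d⟩_ZZ}) ≅ I^{⟨b,d⟩_BL} of U-indexed modules, matching open/closed endpoint types; that is, E(I^{(b,d)_ZZ}) ≅ I^{(b,d)_BL}, E(I^{[b,d)_ZZ}) ≅ I^{[b,d)_BL}, E(I^{(b,d]_ZZ}) ≅ I^{(b,d]_BL}, and E(I^{[b,d]_ZZ}) ≅ I^{[b,d]_BL}. -/

import Mathlib

open scoped DirectSum ENNReal

namespace PersStab

/-- A persistence module indexed by a preordered set `P`, with values in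
`K`-vector spaces. -/
structure PersMod (K : Type) [Field K] (P : Type) [Preorder P] where
  V : P → Type
  [acg : ∀ a, AddCommGroup (V a)]
  [mod : ∀ a, Module K (V a)]
  map : ∀ {a b : P}, a ≤ b → (V a →ₗ[K] V b)
  map_id : ∀ a : P, map (le_refl a) = LinearMap.id
  map_comp : ∀ {a b c : P} (h₁ : a ≤ b) (h₂ : b ≤ c),
    map (h₁.trans h₂) = (map h₂).comp (map h₁)

attribute [instance] PersMod.acg PersMod.mod

variable {K : Type} [Field K] {P : Type} [Preorder P]

/-- Pointwise finite dimensional. -/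
def PersMod.pfd (M : PersMod K P) : Prop := ∀ a, FiniteDimensional K (M.V a)

/-- A morphism of persistence modules (a natural transformation). -/
structure PersHom (M N : PersMod K P) where
  app : ∀ a, M.V a →ₗ[K] N.V a
  natural : ∀ {a b : P} (h : a ≤ b), (app b).comp (M.map h) = (N.map h).comp (app a)

/-- An isomorphism of persistence modules. -/
structure PersIso (M N : PersMod K P) where
  e : ∀ a, M.V a ≃ₗ[K] N.V a
  natural : ∀ {a b : P} (h : a ≤ b) (m : M.V a), e b (M.map h m) = N.map h (e a m)

/-- Convexity: the second defining property of an interval in a poset. -/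
def IsConvexIn (J : Set P) : Prop :=
  ∀ ⦃a b c : P⦄, a ∈ J → c ∈ J → a ≤ b → b ≤ c → b ∈ J

/-- Connectivity: the third defining property of an interval in a poset:
any two points are joined by a finite zigzag of comparable points inside `J`. -/
def IsConnectedIn (J : Set P) : Prop :=
  ∀ a ∈ J, ∀ c ∈ J, ∃ (n : ℕ) (f : Fin (n + 1) → P),
    f 0 = a ∧ f (Fin.last n) = c ∧ (∀ k, f k ∈ J) ∧
    ∀ k : Fin n, f k.castSucc ≤ f k.succ ∨ f k.succ ≤ f k.castSucc

/-- An interval in a poset: nonempty, convex and connected. -/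
structure IsInterval (J : Set P) : Prop where
  nonempty : J.Nonempty
  convex : IsConvexIn J
  connected : IsConnectedIn J

-- The structure map of an interval module: the identity `K → K` if the source
-- lies in the interval, and `0` otherwise.
open Classical in
noncomputable def ivMap (K : Type) [Field K] (J : Set P) (a c : P) :
    (PLift (a ∈ J) → K) →ₗ[K] (PLift (c ∈ J) → K) where
  toFun v _ := if h : a ∈ J then v ⟨h⟩ else 0
  map_add' u v := by
    funext hc
    by_cases h : a ∈ J <;> simp [h]
  map_smul' r v := by
    funext hc
    by_cases h : a ∈ J <;> simp [h]

/-- The interval module `I^J` of a convex set `J`: one-dimensional (a copy of `K`)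
at points of `J`, zero elsewhere, with identity internal maps inside `J`. -/
noncomputable def intervalModule (K : Type) [Field K] (J : Set P) (hJ : IsConvexIn J) :
    PersMod K P where
  V a := PLift (a ∈ J) → K
  map {a c} _ := ivMap K J a c
  map_id a := by
    refine LinearMap.ext fun v => funext fun hc => ?_
    obtain ⟨hc⟩ := hc
    simp only [ivMap, LinearMap.coe_mk, AddHom.coe_mk, LinearMap.id_coe, id_eq]
    rw [dif_pos hc]
  map_comp {a b c} h₁ h₂ := by
    refine LinearMap.ext fun v => funext fun hc => ?_
    simp only [ivMap, LinearMap.coe_mk, AddHom.coe_mk, LinearMap.coe_comp,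
      Function.comp_apply]
    by_cases ha : a ∈ J
    · have hb : b ∈ J := hJ ha hc.down h₁ h₂
      simp [ha, hb]
    · simp [ha]

/-- A decomposition of the persistence module `M` as a direct sum of interval
modules `I^{B i}`, `i : ι`, where all the sets `B i` satisfy the predicate `pred`.
The multiset `{B i | i : ι}` is the barcode of `M`. -/
structure DecompOver (pred : Set P → Prop) (M : PersMod K P) where
  ι : Type
  B : ι → Set P
  mem : ∀ i, pred (B i)
  equiv : ∀ a : P, M.V a ≃ₗ[K] (Π₀ i : ι, (PLift (a ∈ B i) → K))
  natural : ∀ {a c : P} (h : a ≤ c) (m : M.V a),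
    equiv c (M.map h m) =
      DFinsupp.mapRange.linearMap (fun i => ivMap K (B i) a c) (equiv a m)

/-- A matching between two multisets, presented as indexed families: a bijection
between a subset (the coimage) of the index set `ι` and a subset (the image) of
the index set `κ`. -/
structure Matching (ι κ : Type) : Type where
  R : ι → κ → Prop
  functional : ∀ {i j j'}, R i j → R i j' → j = j'
  injective : ∀ {i i' j}, R i j → R i' j → i = i'

section Shift

variable (sh : ℝ → P → P)

/-- `M` is `δ`-trivial (with respect to the shift `sh`): all internal maps
from `p` to the `δ`-shift of `p` vanish. -/
def ETrivial (M : PersMod K P) (δ : ℝ) : Prop :=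
  ∀ (p : P) (h : p ≤ sh δ p), M.map h = 0

/-- The data `(f, g)` is an `ε`-interleaving between `M` and `N`:
`f : M → N(ε)` and `g : N → M(ε)` are natural, and the two composites agree with
the `2ε`-shift morphisms of `M` and `N`. -/
structure IsInterleaving (ε : ℝ) (M N : PersMod K P)
    (f : ∀ p, M.V p →ₗ[K] N.V (sh ε p)) (g : ∀ p, N.V p →ₗ[K] M.V (sh ε p)) : Prop where
  nat_f : ∀ {p q : P} (h : p ≤ q) (h' : sh ε p ≤ sh ε q),
    (f q).comp (M.map h) = (N.map h').comp (f p)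
  nat_g : ∀ {p q : P} (h : p ≤ q) (h' : sh ε p ≤ sh ε q),
    (g q).comp (N.map h) = (M.map h').comp (g p)
  gf : ∀ (p : P) (h : p ≤ sh ε (sh ε p)), (g (sh ε p)).comp (f p) = M.map h
  fg : ∀ (p : P) (h : p ≤ sh ε (sh ε p)), (f (sh ε p)).comp (g p) = N.map h

/-- `M` and `N` are `ε`-interleaved. -/
def Interleaved (ε : ℝ) (M N : PersMod K P) : Prop :=
  0 ≤ ε ∧ ∃ f g, IsInterleaving sh ε M N f g

/-- The interleaving distance, valued in `ℝ≥0∞`. -/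
noncomputable def dI (M N : PersMod K P) : ℝ≥0∞ :=
  ⨅ ε : {e : ℝ // Interleaved sh e M N}, ENNReal.ofReal ε.1

/-- `σ` is an `ε`-matching between the barcodes `{A i}` and `{C j}`:
every interval of either barcode which is not `2ε`-trivial is matched, and
matched intervals have `ε`-interleaved interval modules. -/
def IsEpsMatching (K : Type) [Field K] (ε : ℝ) {ι κ : Type}
    (A : ι → Set P) (hA : ∀ i, IsConvexIn (A i))
    (C : κ → Set P) (hC : ∀ j, IsConvexIn (C j)) (σ : Matching ι κ) : Prop :=
  (∀ i, ¬ ETrivial sh (intervalModule K (A i) (hA i)) (2 * ε) → ∃ j, σ.R i j) ∧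
  (∀ j, ¬ ETrivial sh (intervalModule K (C j) (hC j)) (2 * ε) → ∃ i, σ.R i j) ∧
  (∀ i j, σ.R i j →
    Interleaved sh ε (intervalModule K (A i) (hA i)) (intervalModule K (C j) (hC j)))

/-- The bottleneck distance between two barcodes, valued in `ℝ≥0∞`. -/
noncomputable def dB (K : Type) [Field K] {ι κ : Type}
    (A : ι → Set P) (hA : ∀ i, IsConvexIn (A i))
    (C : κ → Set P) (hC : ∀ j, IsConvexIn (C j)) : ℝ≥0∞ :=
  ⨅ e : {e : ℝ // 0 ≤ e ∧ ∃ σ : Matching ι κ, IsEpsMatching sh K e A hA C hC σ},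
    ENNReal.ofReal e.1

end Shift

end PersStab
namespace PersStab

/-! ### The poset `ℝᵒᵖ × ℝ` and blocks -/

/-- The poset `ℝᵒᵖ × ℝ`: `(a, b) ≤ (c, d)` iff `c ≤ a` and `b ≤ d`. -/
structure RopR where
  x : ℝ
  y : ℝ

instance : Preorder RopR where
  le p q := q.x ≤ p.x ∧ p.y ≤ q.y
  le_refl p := ⟨le_rfl, le_rfl⟩
  le_trans p q r h₁ h₂ := ⟨h₂.1.trans h₁.1, h₁.2.trans h₂.2⟩

lemma RopR.le_def {p q : RopR} : p ≤ q ↔ q.x ≤ p.x ∧ p.y ≤ q.y := Iff.rfl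

/-- The `ε`-shift on the poset `ℝᵒᵖ × ℝ`: `(a, b) ↦ (a - ε, b + ε)`. -/
def shf (ε : ℝ) (p : RopR) : RopR := ⟨p.x - ε, p.y + ε⟩

/-- The block `(a,b)_BL = {(x,y) ∈ U : a < x, y < b}` (with `a`, `b` finite;
for infinite endpoints this shape is of type co, oc or c). -/
def blkO (a b : ℝ) : Set RopR := {p | p.x ≤ p.y ∧ a < p.x ∧ p.y < b}

/-- The blocks `[a,b)_BL = {(x,y) ∈ U : a ≤ y < b}` (for `s = a` finite) and
`(-∞,b)_BL = {(x,y) ∈ U : y < b}` (for `s = ⊥`). -/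
def blkCO (s : EReal) (b : ℝ) : Set RopR := {p | p.x ≤ p.y ∧ s ≤ (p.y : EReal) ∧ p.y < b}

/-- The blocks `(a,b]_BL = {(x,y) ∈ U : a < x ≤ b}` (for `t = b` finite) and
`(a,∞)_BL = {(x,y) ∈ U : a < x}` (for `t = ⊤`). -/
def blkOC (a : ℝ) (t : EReal) : Set RopR := {p | p.x ≤ p.y ∧ a < p.x ∧ (p.x : EReal) ≤ t}

/-- The closed blocks `{(x,y) ∈ U : x ≤ t, s ≤ y}`: this includes `[a,b]_BL`
(`s = a ≤ t = b` finite), `[b,a]_BL` (`t = a < s = b` finite), `[a,∞)_BL` (`t = ⊤`),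
`(-∞,b]_BL` (`s = ⊥`) and `(-∞,∞)_BL = U`. -/
def blkC (s t : EReal) : Set RopR := {p | p.x ≤ p.y ∧ (p.x : EReal) ≤ t ∧ s ≤ (p.y : EReal)}

/-- The four types of blocks. -/
inductive BlockType : Type
  | o | co | oc | c
deriving DecidableEq

/-- The blocks of each type. -/
def IsBlockOfType : BlockType → Set RopR → Prop
  | .o, J => ∃ a b : ℝ, a < b ∧ J = blkO a b
  | .co, J => ∃ (s : EReal) (b : ℝ), s ≠ ⊤ ∧ s < (b : EReal) ∧ J = blkCO s b
  | .oc, J => ∃ (a : ℝ) (t : EReal), t ≠ ⊥ ∧ (a : EReal) < t ∧ J = blkOC a t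
  | .c, J => ∃ s t : EReal, s ≠ ⊤ ∧ t ≠ ⊥ ∧ J = blkC s t

/-- A block: an interval of `U ⊆ ℝᵒᵖ × ℝ` of one of the five standard shapes. -/
def IsBlock (J : Set RopR) : Prop := ∃ τ, IsBlockOfType τ J

lemma blkO_convex (a b : ℝ) : IsConvexIn (blkO a b) := by
  rintro p q r ⟨hp1, hp2, hp3⟩ ⟨hr1, hr2, hr3⟩ ⟨hpq1, hpq2⟩ ⟨hqr1, hqr2⟩
  exact ⟨by linarith, by linarith, by linarith⟩

lemma blkCO_convex (s : EReal) (b : ℝ) : IsConvexIn (blkCO s b) := by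
  rintro p q r ⟨hp1, hp2, hp3⟩ ⟨hr1, hr2, hr3⟩ ⟨hpq1, hpq2⟩ ⟨hqr1, hqr2⟩
  refine ⟨by linarith, hp2.trans ?_, by linarith⟩
  exact_mod_cast hpq2

lemma blkOC_convex (a : ℝ) (t : EReal) : IsConvexIn (blkOC a t) := by
  rintro p q r ⟨hp1, hp2, hp3⟩ ⟨hr1, hr2, hr3⟩ ⟨hpq1, hpq2⟩ ⟨hqr1, hqr2⟩
  refine ⟨by linarith, by linarith, le_trans ?_ hp3⟩
  exact_mod_cast hpq1

lemma blkC_convex (s t : EReal) : IsConvexIn (blkC s t) := by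
  rintro p q r ⟨hp1, hp2, hp3⟩ ⟨hr1, hr2, hr3⟩ ⟨hpq1, hpq2⟩ ⟨hqr1, hqr2⟩
  refine ⟨by linarith, le_trans ?_ hp2, hp3.trans ?_⟩
  · exact_mod_cast hpq1
  · exact_mod_cast hpq2

lemma IsBlockOfType.convex {τ : BlockType} {J : Set RopR} (h : IsBlockOfType τ J) :
    IsConvexIn J := by
  cases τ with
  | o => obtain ⟨a, b, -, rfl⟩ := h; exact blkO_convex a b
  | co => obtain ⟨s, b, -, -, rfl⟩ := h; exact blkCO_convex s b
  | oc => obtain ⟨a, t, -, -, rfl⟩ := h; exact blkOC_convex a t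
  | c => obtain ⟨s, t, -, -, rfl⟩ := h; exact blkC_convex s t

lemma IsBlock.convex {J : Set RopR} (h : IsBlock J) : IsConvexIn J :=
  h.choose_spec.convex

end PersStab
namespace PersStab

/-! ### The zigzag poset `ZZ ⊆ ℤᵒᵖ × ℤ` and the poset `U ⊆ ℝᵒᵖ × ℝ` -/

/-- The zigzag poset `ZZ = {(i,j) : i ∈ ℤ, j ∈ {i, i-1}} ⊆ ℤᵒᵖ × ℤ`. -/
structure ZZpt where
  i : ℤ
  j : ℤ
  hij : j = i ∨ j = i - 1

instance : Preorder ZZpt where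
  le p q := q.i ≤ p.i ∧ p.j ≤ q.j
  le_refl p := ⟨le_rfl, le_rfl⟩
  le_trans p q r h₁ h₂ := ⟨h₂.1.trans h₁.1, h₁.2.trans h₂.2⟩

lemma ZZpt.le_def {p q : ZZpt} : p ≤ q ↔ q.i ≤ p.i ∧ p.j ≤ q.j := Iff.rfl

lemma ZZpt.j_le_i (p : ZZpt) : p.j ≤ p.i := by
  rcases p.hij with h | h <;> omega

/-- The first coordinate of a zigzag point, as an extended real. -/
def pI (p : ZZpt) : EReal := ((p.i : ℝ) : EReal)
/-- The second coordinate of a zigzag point, as an extended real. -/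
def pJ (p : ZZpt) : EReal := ((p.j : ℝ) : EReal)

lemma pJ_le_pI (p : ZZpt) : pJ p ≤ pI p := by
  unfold pI pJ
  exact_mod_cast p.j_le_i

lemma pI_mono {p q : ZZpt} (h : q.i ≤ p.i) : pI q ≤ pI p := by
  unfold pI; exact_mod_cast h

lemma pJ_mono {p q : ZZpt} (h : p.j ≤ q.j) : pJ p ≤ pJ q := by
  unfold pJ; exact_mod_cast h

/-- `(β,β) ≤ (i,j)` in the product order (with extended-real endpoints). -/
def zzLeLo (β : EReal) (p : ZZpt) : Prop := β ≤ pI p ∧ β ≤ pJ p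
/-- `(β,β) < (i,j)` in the product order. -/
def zzLtLo (β : EReal) (p : ZZpt) : Prop := zzLeLo β p ∧ ¬(pI p ≤ β ∧ pJ p ≤ β)
/-- `(i,j) ≤ (δ,δ)` in the product order. -/
def zzLeHi (p : ZZpt) (δ : EReal) : Prop := pI p ≤ δ ∧ pJ p ≤ δ
/-- `(i,j) < (δ,δ)` in the product order. -/
def zzLtHi (p : ZZpt) (δ : EReal) : Prop := zzLeHi p δ ∧ ¬(δ ≤ pI p ∧ δ ≤ pJ p)

/-- The zigzag interval `(β,δ)_ZZ`. -/
def zzO (β δ : EReal) : Set ZZpt := {p | zzLtLo β p ∧ zzLtHi p δ}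
/-- The zigzag interval `[β,δ)_ZZ`. -/
def zzCO (β δ : EReal) : Set ZZpt := {p | zzLeLo β p ∧ zzLtHi p δ}
/-- The zigzag interval `(β,δ]_ZZ`. -/
def zzOC (β δ : EReal) : Set ZZpt := {p | zzLtLo β p ∧ zzLeHi p δ}
/-- The zigzag interval `[β,δ]_ZZ`. -/
def zzCC (β δ : EReal) : Set ZZpt := {p | zzLeLo β p ∧ zzLeHi p δ}

lemma zzLeLo_iff (β : EReal) (p : ZZpt) : zzLeLo β p ↔ β ≤ pJ p :=
  ⟨fun h => h.2, fun h => ⟨h.trans (pJ_le_pI p), h⟩⟩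

lemma zzLtLo_iff (β : EReal) (p : ZZpt) : zzLtLo β p ↔ β ≤ pJ p ∧ β < pI p := by
  constructor
  · rintro ⟨⟨h1, h2⟩, h3⟩
    refine ⟨h2, not_le.mp fun h => h3 ⟨h, (pJ_le_pI p).trans h⟩⟩
  · rintro ⟨h1, h2⟩
    exact ⟨⟨h2.le, h1⟩, fun h => absurd h.1 (not_le.mpr h2)⟩

lemma zzLeHi_iff (p : ZZpt) (δ : EReal) : zzLeHi p δ ↔ pI p ≤ δ :=
  ⟨fun h => h.1, fun h => ⟨h, (pJ_le_pI p).trans h⟩⟩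

lemma zzLtHi_iff (p : ZZpt) (δ : EReal) : zzLtHi p δ ↔ pI p ≤ δ ∧ pJ p < δ := by
  constructor
  · rintro ⟨⟨h1, h2⟩, h3⟩
    refine ⟨h1, not_le.mp fun h => h3 ⟨(h.trans (pJ_le_pI p) : δ ≤ pI p), h⟩⟩
  · rintro ⟨h1, h2⟩
    exact ⟨⟨h1, h2.le⟩, fun h => absurd h.2 (not_le.mpr h2)⟩

lemma zzO_convex (β δ : EReal) : IsConvexIn (zzO β δ) := by
  rintro p q r ⟨hp1, hp2⟩ ⟨hr1, hr2⟩ hpq hqr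
  rw [zzLtLo_iff] at hp1 hr1
  rw [zzLtHi_iff] at hp2 hr2
  exact ⟨(zzLtLo_iff β q).2 ⟨hp1.1.trans (pJ_mono hpq.2),
      lt_of_lt_of_le hr1.2 (pI_mono hqr.1)⟩,
    (zzLtHi_iff q δ).2 ⟨(pI_mono hpq.1).trans hp2.1,
      lt_of_le_of_lt (pJ_mono hqr.2) hr2.2⟩⟩

lemma zzCO_convex (β δ : EReal) : IsConvexIn (zzCO β δ) := by
  rintro p q r ⟨hp1, hp2⟩ ⟨hr1, hr2⟩ hpq hqr
  rw [zzLeLo_iff] at hp1 hr1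
  rw [zzLtHi_iff] at hp2 hr2
  exact ⟨(zzLeLo_iff β q).2 (hp1.trans (pJ_mono hpq.2)),
    (zzLtHi_iff q δ).2 ⟨(pI_mono hpq.1).trans hp2.1,
      lt_of_le_of_lt (pJ_mono hqr.2) hr2.2⟩⟩

lemma zzOC_convex (β δ : EReal) : IsConvexIn (zzOC β δ) := by
  rintro p q r ⟨hp1, hp2⟩ ⟨hr1, hr2⟩ hpq hqr
  rw [zzLtLo_iff] at hp1 hr1
  rw [zzLeHi_iff] at hp2 hr2
  exact ⟨(zzLtLo_iff β q).2 ⟨hp1.1.trans (pJ_mono hpq.2),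
      lt_of_lt_of_le hr1.2 (pI_mono hqr.1)⟩,
    (zzLeHi_iff q δ).2 ((pI_mono hpq.1).trans hp2)⟩

lemma zzCC_convex (β δ : EReal) : IsConvexIn (zzCC β δ) := by
  rintro p q r ⟨hp1, hp2⟩ ⟨hr1, hr2⟩ hpq hqr
  rw [zzLeLo_iff] at hp1 hr1
  rw [zzLeHi_iff] at hp2 hr2
  exact ⟨(zzLeLo_iff β q).2 (hp1.trans (pJ_mono hpq.2)),
    (zzLeHi_iff q δ).2 ((pI_mono hpq.1).trans hp2)⟩

/-- The poset `U ⊆ ℝᵒᵖ × ℝ` of pairs `(x, y)` with `x ≤ y`. -/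
abbrev UPos := {p : RopR // p.x ≤ p.y}

lemma UPos.le_def {u v : UPos} : u ≤ v ↔ v.1.x ≤ u.1.x ∧ u.1.y ≤ v.1.y := Iff.rfl

/-- The block `(β,δ)_BL` of `U` (extended-real endpoints). -/
def ublkO (β δ : EReal) : Set UPos := {u | β < (u.1.x : EReal) ∧ ((u.1.y : EReal)) < δ}
/-- The block `[β,δ)_BL` of `U`. -/
def ublkCO (β δ : EReal) : Set UPos := {u | β ≤ (u.1.y : EReal) ∧ ((u.1.y : EReal)) < δ}
/-- The block `(β,δ]_BL` of `U`. -/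
def ublkOC (β δ : EReal) : Set UPos := {u | β < (u.1.x : EReal) ∧ ((u.1.x : EReal)) ≤ δ}
/-- The block `[β,δ]_BL` of `U`. -/
def ublkCC (β δ : EReal) : Set UPos := {u | ((u.1.x : EReal)) ≤ δ ∧ β ≤ (u.1.y : EReal)}

lemma coeR_mono {s t : ℝ} (h : s ≤ t) : (s : EReal) ≤ (t : EReal) := by exact_mod_cast h

lemma ublkO_convex (β δ : EReal) : IsConvexIn (ublkO β δ) := by
  rintro p q r ⟨hp1, hp2⟩ ⟨hr1, hr2⟩ hpq hqr
  exact ⟨lt_of_lt_of_le hr1 (coeR_mono hqr.1), lt_of_le_of_lt (coeR_mono hqr.2) hr2⟩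

lemma ublkCO_convex (β δ : EReal) : IsConvexIn (ublkCO β δ) := by
  rintro p q r ⟨hp1, hp2⟩ ⟨hr1, hr2⟩ hpq hqr
  exact ⟨hp1.trans (coeR_mono hpq.2), lt_of_le_of_lt (coeR_mono hqr.2) hr2⟩

lemma ublkOC_convex (β δ : EReal) : IsConvexIn (ublkOC β δ) := by
  rintro p q r ⟨hp1, hp2⟩ ⟨hr1, hr2⟩ hpq hqr
  exact ⟨lt_of_lt_of_le hr1 (coeR_mono hqr.1), (coeR_mono hpq.1).trans hp2⟩

lemma ublkCC_convex (β δ : EReal) : IsConvexIn (ublkCC β δ) := by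
  rintro p q r ⟨hp1, hp2⟩ ⟨hr1, hr2⟩ hpq hqr
  exact ⟨(coeR_mono hpq.1).trans hp1, hp2.trans (coeR_mono hpq.2)⟩

/-! ### The block extension functor `E` -/

variable {K : Type} [Field K]

attribute [local instance] Classical.decEq

/-- The set of zigzag indices lying below `u ∈ U` in `ℝᵒᵖ × ℝ`:
`{(i,j) ∈ ZZ : u.x ≤ i and j ≤ u.y}`. -/
def ZZbelow (u : UPos) : Set ZZpt := {p | u.1.x ≤ (p.i : ℝ) ∧ (p.j : ℝ) ≤ u.1.y}

lemma ZZbelow_mono {u v : UPos} (h : u ≤ v) : ZZbelow u ⊆ ZZbelow v := by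
  rintro p ⟨h1, h2⟩
  exact ⟨le_trans h.1 h1, le_trans h2 h.2⟩

/-- The submodule of relations defining the colimit of `V` over `S`. -/
noncomputable def relSub (V : PersMod K ZZpt) (S : Set ZZpt) :
    Submodule K (⨁ p : S, V.V p.1) :=
  Submodule.span K {x | ∃ (p q : ↥S) (h : p.1 ≤ q.1) (v : V.V p.1),
    x = DirectSum.lof K ↥S (fun r => V.V r.1) p v -
      DirectSum.lof K ↥S (fun r => V.V r.1) q (V.map h v)}

/-- The map between direct sums induced by an inclusion of index sets. -/
noncomputable def fwd (V : PersMod K ZZpt) {S T : Set ZZpt} (hST : S ⊆ T) :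
    (⨁ p : S, V.V p.1) →ₗ[K] (⨁ p : T, V.V p.1) :=
  DirectSum.toModule K ↥S _
    (fun p => DirectSum.lof K ↥T (fun r => V.V r.1) ⟨p.1, hST p.2⟩)

set_option maxHeartbeats 1000000 in
lemma fwd_lof (V : PersMod K ZZpt) {S T : Set ZZpt} (hST : S ⊆ T) (p : ↥S)
    (v : V.V p.1) :
    fwd V hST (DirectSum.lof K ↥S (fun r => V.V r.1) p v) =
      DirectSum.lof K ↥T (fun r => V.V r.1) ⟨p.1, hST p.2⟩ v := by
  unfold fwd
  exact DirectSum.toModule_lof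
    (φ := fun q : ↥S => DirectSum.lof K ↥T (fun r => V.V r.1) ⟨q.1, hST q.2⟩) K p v

lemma fwd_rel (V : PersMod K ZZpt) {S T : Set ZZpt} (hST : S ⊆ T) :
    relSub V S ≤ (relSub V T).comap (fwd V hST) := by
  rw [← Submodule.map_le_iff_le_comap, relSub, Submodule.map_span]
  refine Submodule.span_le.2 ?_
  rintro x ⟨y, ⟨p, q, h, v, rfl⟩, rfl⟩
  refine Submodule.subset_span ?_
  refine ⟨⟨p.1, hST p.2⟩, ⟨q.1, hST q.2⟩, h, v, ?_⟩
  rw [map_sub, fwd_lof, fwd_lof]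

/-- The block extension functor `E` on objects: `E(V)` is the `U`-indexed module
whose value at `u` is the colimit of `V` over `{(i,j) ∈ ZZ : u.x ≤ i, j ≤ u.y}`,
computed as a quotient of a direct sum. -/
noncomputable def EMod (V : PersMod K ZZpt) : PersMod K UPos where
  V u := (⨁ p : ZZbelow u, V.V p.1) ⧸ relSub V (ZZbelow u)
  map {u v} h := Submodule.mapQ _ _ (fwd V (ZZbelow_mono h)) (fwd_rel V (ZZbelow_mono h))
  map_id u := by
    refine Submodule.linearMap_qext _ ?_
    refine DirectSum.linearMap_ext _ fun p => ?_
    obtain ⟨pv, hp⟩ := p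
    refine LinearMap.ext fun v => ?_
    simp only [LinearMap.coe_comp, Function.comp_apply, Submodule.mkQ_apply,
      Submodule.mapQ_apply, LinearMap.id_coe, id_eq]
    rw [fwd_lof]
  map_comp {u v w} h₁ h₂ := by
    refine Submodule.linearMap_qext _ ?_
    refine DirectSum.linearMap_ext _ fun p => ?_
    obtain ⟨pv, hp⟩ := p
    refine LinearMap.ext fun x => ?_
    simp only [LinearMap.coe_comp, Function.comp_apply, Submodule.mkQ_apply,
      Submodule.mapQ_apply]
    rw [fwd_lof, fwd_lof, fwd_lof]

end PersStab
namespace PersStab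

/-- Endpoints in `ℤ ∪ {±∞}`, coerced into the extended reals. -/
noncomputable def ez : WithBot (WithTop ℤ) → EReal
  | none => ⊥
  | some none => ⊤
  | some (some n) => ((n : ℝ) : EReal)

section BlockExtMachinery

attribute [local instance] Classical.decEq

variable {K : Type} [Field K]

lemma ZZpt.ext' {p q : ZZpt} (h1 : p.i = q.i) (h2 : p.j = q.j) : p = q := by
  cases p; cases q; simp_all

/-- Position of a zigzag point along the fence. -/
def zpos (p : ZZpt) : ℤ := p.i + p.j

open Classical in
/-- Generic map between one-dimensional pieces. -/
noncomputable def pmap (K : Type) [Field K] (P Q : Prop) :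
    (PLift P → K) →ₗ[K] (PLift Q → K) where
  toFun v _ := if h : P then v ⟨h⟩ else 0
  map_add' u v := by
    funext hq; by_cases h : P <;> simp [h]
  map_smul' r v := by
    funext hq; by_cases h : P <;> simp [h]

lemma pmap_apply {P Q : Prop} (hP : P) (v : PLift P → K) (hq : PLift Q) :
    pmap K P Q v hq = v ⟨hP⟩ := dif_pos hP

lemma pmap_apply_neg {P Q : Prop} (hP : ¬ P) (v : PLift P → K) (hq : PLift Q) :
    pmap K P Q v hq = 0 := dif_neg hP

lemma ivMap_apply {P : Type} [Preorder P] {J : Set P} {a : P} (c : P) (ha : a ∈ J)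
    (v : PLift (a ∈ J) → K) (hc : PLift (c ∈ J)) :
    ivMap K J a c v hc = v ⟨ha⟩ := dif_pos ha

lemma ivMap_apply_neg {P : Type} [Preorder P] {J : Set P} {a : P} (c : P) (ha : a ∉ J)
    (v : PLift (a ∈ J) → K) (hc : PLift (c ∈ J)) :
    ivMap K J a c v hc = 0 := dif_neg ha

variable (K) (J : Set ZZpt) (B : Set UPos)

/-- The comparison map on the direct sum. -/
noncomputable def phiRaw (hJ : IsConvexIn J) (u : UPos) :
    (⨁ p : ZZbelow u, (intervalModule K J hJ).V p.1) →ₗ[K] (PLift (u ∈ B) → K) :=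
  DirectSum.toModule K (ZZbelow u) _ fun p => pmap K (p.1 ∈ J) (u ∈ B)

lemma phiRaw_lof (hJ : IsConvexIn J) (u : UPos) (p : ZZbelow u)
    (v : (intervalModule K J hJ).V p.1) :
    phiRaw K J B hJ u (DirectSum.lof K (ZZbelow u)
      (fun r => (intervalModule K J hJ).V r.1) p v) = pmap K (p.1 ∈ J) (u ∈ B) v := by
  unfold phiRaw
  exact DirectSum.toModule_lof (φ := fun p : ZZbelow u => pmap K (p.1 ∈ J) (u ∈ B)) K p v

/-- `Hup`: for `u ∈ B`, points of `J` are upward closed inside `ZZbelow u`. -/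
def Hup : Prop := ∀ u : UPos, u ∈ B → ∀ p q : ZZpt, p ∈ J → q ∈ ZZbelow u → p ≤ q → q ∈ J

/-- `Hbox`: `J ∩ ZZbelow u` is a box. -/
def Hbox : Prop := ∀ (u : UPos) (p q r : ZZpt), p ∈ J → p ∈ ZZbelow u → q ∈ J →
  q ∈ ZZbelow u → p.i ≤ r.i → r.i ≤ q.i → p.j ≤ r.j → r.j ≤ q.j → r ∈ J ∧ r ∈ ZZbelow u

/-- `Hne`: for `u ∈ B`, `J ∩ ZZbelow u` is nonempty. -/
def Hne : Prop := ∀ u : UPos, u ∈ B → ∃ p, p ∈ J ∧ p ∈ ZZbelow u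

/-- `Hkill`: for `u ∉ B`, if `J ∩ ZZbelow u` is inhabited then some point of it
is dominated by a point of `ZZbelow u` outside `J`. -/
def Hkill : Prop := ∀ u : UPos, u ∉ B → ∀ p : ZZpt, p ∈ J → p ∈ ZZbelow u →
  ∃ p₀ q : ZZpt, p₀ ∈ J ∧ p₀ ∈ ZZbelow u ∧ q ∈ ZZbelow u ∧ p₀ ≤ q ∧ q ∉ J

lemma phiRaw_rel (hJ : IsConvexIn J) (hyp2 : Hup J B) (u : UPos) :
    relSub (intervalModule K J hJ) (ZZbelow u) ≤ LinearMap.ker (phiRaw K J B hJ u) := by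
  rw [relSub]
  refine Submodule.span_le.2 ?_
  rintro x ⟨p, q, h, v, rfl⟩
  rw [SetLike.mem_coe, LinearMap.mem_ker, map_sub, phiRaw_lof, phiRaw_lof, sub_eq_zero]
  funext hu
  by_cases hp : p.1 ∈ J
  · have hq : q.1 ∈ J := hyp2 u hu.down p q hp q.2 h
    exact (pmap_apply hp v hu).trans ((ivMap_apply q.1 hp v ⟨hq⟩).symm.trans (pmap_apply hq _ hu).symm)
  · by_cases hq : q.1 ∈ J
    · exact (pmap_apply_neg hp v hu).trans
        ((ivMap_apply_neg q.1 hp v ⟨hq⟩).symm.trans (pmap_apply hq _ hu).symm)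
    · exact (pmap_apply_neg hp v hu).trans (pmap_apply_neg hq _ hu).symm

/-- The descended comparison map. -/
noncomputable def phiQ (hJ : IsConvexIn J) (hyp2 : Hup J B) (u : UPos) :
    (EMod (intervalModule K J hJ)).V u →ₗ[K] (PLift (u ∈ B) → K) :=
  Submodule.liftQ _ (phiRaw K J B hJ u) (phiRaw_rel K J B hJ hyp2 u)

open Classical in
/-- The inverse map. -/
noncomputable def psiQ (hJ : IsConvexIn J) (hyp3 : Hne J B) (u : UPos) :
    (PLift (u ∈ B) → K) →ₗ[K] (EMod (intervalModule K J hJ)).V u :=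
  if h : u ∈ B then
    (Submodule.mkQ _).comp ((DirectSum.lof K (ZZbelow u)
        (fun r => (intervalModule K J hJ).V r.1)
        ⟨(hyp3 u h).choose, (hyp3 u h).choose_spec.2⟩).comp
      (pmap K (u ∈ B) ((hyp3 u h).choose ∈ J)))
  else 0

lemma psiQ_pos (hJ : IsConvexIn J) (hyp3 : Hne J B) (u : UPos) (h : u ∈ B) :
    psiQ K J B hJ hyp3 u = (Submodule.mkQ _).comp ((DirectSum.lof K (ZZbelow u)
        (fun r => (intervalModule K J hJ).V r.1)
        ⟨(hyp3 u h).choose, (hyp3 u h).choose_spec.2⟩).comp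
      (pmap K (u ∈ B) ((hyp3 u h).choose ∈ J))) := dif_pos h

lemma psiQ_neg (hJ : IsConvexIn J) (hyp3 : Hne J B) (u : UPos) (h : u ∉ B) :
    psiQ K J B hJ hyp3 u = 0 := dif_neg h

lemma mk_lof_step (hJ : IsConvexIn J) (u : UPos) {p q : ZZpt} (hpb : p ∈ ZZbelow u)
    (hqb : q ∈ ZZbelow u) (hp : p ∈ J) (hq : q ∈ J) (hpq : p ≤ q) (k : K) :
    (Submodule.Quotient.mk (DirectSum.lof K (ZZbelow u)
        (fun r => (intervalModule K J hJ).V r.1) ⟨p, hpb⟩ (fun _ => k)) :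
      (EMod (intervalModule K J hJ)).V u) =
    Submodule.Quotient.mk (DirectSum.lof K (ZZbelow u)
        (fun r => (intervalModule K J hJ).V r.1) ⟨q, hqb⟩ (fun _ => k)) := by
  rw [Submodule.Quotient.eq]
  have hmap : (intervalModule K J hJ).map hpq (fun _ => k) =
      (fun _ => k : PLift (q ∈ J) → K) :=
    funext fun hc => ivMap_apply q hp _ hc
  refine Submodule.subset_span ⟨⟨p, hpb⟩, ⟨q, hqb⟩, hpq, (fun _ => k), ?_⟩
  rw [hmap]

lemma mk_lof_kill (hJ : IsConvexIn J) (u : UPos) {p₀ q : ZZpt} (hp₀b : p₀ ∈ ZZbelow u)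
    (hqb : q ∈ ZZbelow u) (hpq : p₀ ≤ q) (hq : q ∉ J) (v : (intervalModule K J hJ).V p₀) :
    (Submodule.Quotient.mk (DirectSum.lof K (ZZbelow u)
        (fun r => (intervalModule K J hJ).V r.1) ⟨p₀, hp₀b⟩ v) :
      (EMod (intervalModule K J hJ)).V u) = 0 := by
  rw [Submodule.Quotient.mk_eq_zero]
  have h1 : DirectSum.lof K (ZZbelow u) (fun r => (intervalModule K J hJ).V r.1) ⟨p₀, hp₀b⟩ v
      - DirectSum.lof K (ZZbelow u) (fun r => (intervalModule K J hJ).V r.1) ⟨q, hqb⟩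
        ((intervalModule K J hJ).map hpq v) ∈ relSub (intervalModule K J hJ) (ZZbelow u) :=
    Submodule.subset_span ⟨⟨p₀, hp₀b⟩, ⟨q, hqb⟩, hpq, v, rfl⟩
  have h2 : (intervalModule K J hJ).map hpq v = 0 := funext fun hc => absurd hc.down hq
  rwa [h2, map_zero, sub_zero] at h1

lemma conn_aux (hJ : IsConvexIn J) (hyp1 : Hbox J) (u : UPos) :
    ∀ (n : ℕ) (p q : ZZpt) (hp : p ∈ J) (hpb : p ∈ ZZbelow u) (hq : q ∈ J)
      (hqb : q ∈ ZZbelow u), zpos p ≤ zpos q → (zpos q - zpos p).toNat = n → ∀ k : K,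
      (Submodule.Quotient.mk (DirectSum.lof K (ZZbelow u)
          (fun r => (intervalModule K J hJ).V r.1) ⟨p, hpb⟩ (fun _ => k)) :
        (EMod (intervalModule K J hJ)).V u) =
      Submodule.Quotient.mk (DirectSum.lof K (ZZbelow u)
          (fun r => (intervalModule K J hJ).V r.1) ⟨q, hqb⟩ (fun _ => k)) := by
  intro n
  induction n with
  | zero =>
    intro p q hp hpb hq hqb hle h0 k
    have hpq : p = q := by
      have h1 := p.hij; have h2 := q.hij
      simp only [zpos] at hle h0
      refine ZZpt.ext' ?_ ?_ <;> omega
    subst hpq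
    rfl
  | succ n ih =>
    intro p q hp hpb hq hqb hle hn k
    have h2 := q.hij
    simp only [zpos] at hle hn
    rcases p.hij with hpe | hpe
    · -- peak : p.j = p.i, successor r = (p.i+1, p.i) with r ≤ p
      obtain ⟨r, hri, hrj⟩ : ∃ r : ZZpt, r.i = p.i + 1 ∧ r.j = p.i :=
        ⟨⟨p.i + 1, p.i, Or.inr (by omega)⟩, rfl, rfl⟩
      obtain ⟨hrJ, hrb⟩ := hyp1 u p q r hp hpb hq hqb (by omega) (by omega)
        (by omega) (by omega)
      have hle' : r ≤ p := ⟨by omega, by omega⟩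
      have hstep := mk_lof_step K J hJ u hrb hpb hrJ hp hle' k
      rw [← hstep]
      exact ih r q hrJ hrb hq hqb (by simp only [zpos]; omega)
        (by simp only [zpos]; omega) k
    · -- valley : p.j = p.i - 1, successor r = (p.i, p.i) with p ≤ r
      obtain ⟨r, hri, hrj⟩ : ∃ r : ZZpt, r.i = p.i ∧ r.j = p.i :=
        ⟨⟨p.i, p.i, Or.inl rfl⟩, rfl, rfl⟩
      obtain ⟨hrJ, hrb⟩ := hyp1 u p q r hp hpb hq hqb (by omega) (by omega)
        (by omega) (by omega)
      have hle' : p ≤ r := ⟨by omega, by omega⟩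
      have hstep := mk_lof_step K J hJ u hpb hrb hp hrJ hle' k
      rw [hstep]
      exact ih r q hrJ hrb hq hqb (by simp only [zpos]; omega)
        (by simp only [zpos]; omega) k

lemma conn (hJ : IsConvexIn J) (hyp1 : Hbox J) (u : UPos) {p q : ZZpt} (hp : p ∈ J)
    (hpb : p ∈ ZZbelow u) (hq : q ∈ J) (hqb : q ∈ ZZbelow u) (k : K) :
    (Submodule.Quotient.mk (DirectSum.lof K (ZZbelow u)
        (fun r => (intervalModule K J hJ).V r.1) ⟨p, hpb⟩ (fun _ => k)) :
      (EMod (intervalModule K J hJ)).V u) =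
    Submodule.Quotient.mk (DirectSum.lof K (ZZbelow u)
        (fun r => (intervalModule K J hJ).V r.1) ⟨q, hqb⟩ (fun _ => k)) := by
  rcases le_total (zpos p) (zpos q) with h | h
  · exact conn_aux K J hJ hyp1 u _ p q hp hpb hq hqb h rfl k
  · exact (conn_aux K J hJ hyp1 u _ q p hq hqb hp hpb h rfl k).symm

lemma phi_psi (hJ : IsConvexIn J) (hyp2 : Hup J B) (hyp3 : Hne J B) (u : UPos) :
    (phiQ K J B hJ hyp2 u).comp (psiQ K J B hJ hyp3 u) = LinearMap.id := by
  by_cases h : u ∈ B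
  · refine LinearMap.ext fun v => ?_
    have hc := (hyp3 u h).choose_spec
    rw [LinearMap.comp_apply, psiQ_pos K J B hJ hyp3 u h]
    simp only [LinearMap.coe_comp, Function.comp_apply, Submodule.mkQ_apply]
    erw [phiQ, Submodule.liftQ_apply, phiRaw_lof]
    funext hu
    exact (dif_pos hc.1).trans (dif_pos h)
  · refine LinearMap.ext fun v => funext fun hu => absurd hu.down h

lemma psi_phi (hJ : IsConvexIn J) (hyp1 : Hbox J) (hyp2 : Hup J B) (hyp3 : Hne J B)
    (hyp4 : Hkill J B) (u : UPos) :
    (psiQ K J B hJ hyp3 u).comp (phiQ K J B hJ hyp2 u) = LinearMap.id := by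
  refine Submodule.linearMap_qext _ ?_
  refine DirectSum.linearMap_ext _ fun p => ?_
  refine LinearMap.ext fun v => ?_
  simp only [LinearMap.coe_comp, Function.comp_apply, Submodule.mkQ_apply,
    LinearMap.id_coe, id_eq]
  change psiQ K J B hJ hyp3 u (phiQ K J B hJ hyp2 u (Submodule.Quotient.mk (DirectSum.lof K
      (ZZbelow u) (fun r => (intervalModule K J hJ).V r.1) p v))) = Submodule.Quotient.mk
      (DirectSum.lof K (ZZbelow u) (fun r => (intervalModule K J hJ).V r.1) p v)
  rw [show phiQ K J B hJ hyp2 u (Submodule.Quotient.mk (DirectSum.lof K (ZZbelow u)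
      (fun r => (intervalModule K J hJ).V r.1) p v)) = pmap K (p.1 ∈ J) (u ∈ B) v
      from phiRaw_lof K J B hJ u p v]
  by_cases hp : p.1 ∈ J
  · by_cases hu : u ∈ B
    · have hcs := (hyp3 u hu).choose_spec
      rw [psiQ_pos K J B hJ hyp3 u hu]
      have hpm : pmap K (u ∈ B) ((hyp3 u hu).choose ∈ J) (pmap K (p.1 ∈ J) (u ∈ B) v) =
          fun _ => v ⟨hp⟩ := funext fun hc => (dif_pos hu).trans (dif_pos hp)
      refine Eq.trans (congrArg (fun w => (Submodule.Quotient.mk ((DirectSum.lof K (ZZbelow u)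
          (fun r => (intervalModule K J hJ).V r.1)
          ⟨(hyp3 u hu).choose, (hyp3 u hu).choose_spec.2⟩) w) :
          (EMod (intervalModule K J hJ)).V u)) hpm) ?_
      exact conn K J hJ hyp1 u hcs.1 hcs.2 hp p.2 (v ⟨hp⟩)
    · rw [psiQ_neg K J B hJ hyp3 u hu, LinearMap.zero_apply]
      obtain ⟨p₀, q, hp₀, hp₀b, hqb, hpq, hqJ⟩ := hyp4 u hu p.1 hp p.2
      have h1 := mk_lof_kill K J hJ u hp₀b hqb hpq hqJ (fun _ => v ⟨hp⟩)
      have h2 : (Submodule.Quotient.mk (DirectSum.lof K (ZZbelow u)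
          (fun r => (intervalModule K J hJ).V r.1) p v) :
            (EMod (intervalModule K J hJ)).V u) =
          Submodule.Quotient.mk (DirectSum.lof K (ZZbelow u)
            (fun r => (intervalModule K J hJ).V r.1) ⟨p₀, hp₀b⟩ (fun _ => v ⟨hp⟩)) := by
        exact conn K J hJ hyp1 u hp p.2 hp₀ hp₀b (v ⟨hp⟩)
      rw [h2, h1]
      rfl
  · have hv : v = 0 := funext fun x => absurd x.down hp
    rw [hv]
    exact (congrArg (psiQ K J B hJ hyp3 u) (map_zero (pmap K (p.1 ∈ J) (u ∈ B)))).trans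
      ((map_zero _).trans ((Submodule.Quotient.mk_zero _).symm.trans (congrArg Submodule.Quotient.mk
        (map_zero (DirectSum.lof K (ZZbelow u) (fun r => (intervalModule K J hJ).V r.1) p)).symm)))

lemma phiQ_nat (hJ : IsConvexIn J) (hB : IsConvexIn B) (hyp2 : Hup J B) (hyp4 : Hkill J B)
    {u w : UPos} (h : u ≤ w) :
    (phiQ K J B hJ hyp2 w).comp ((EMod (intervalModule K J hJ)).map h) =
      ((intervalModule K B hB).map h).comp (phiQ K J B hJ hyp2 u) := by
  refine Submodule.linearMap_qext _ ?_
  refine DirectSum.linearMap_ext _ fun p => ?_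
  refine LinearMap.ext fun v => ?_
  simp only [LinearMap.coe_comp, Function.comp_apply, Submodule.mkQ_apply]
  have hl : (EMod (intervalModule K J hJ)).map h (Submodule.Quotient.mk
        (DirectSum.lof K (ZZbelow u) (fun r => (intervalModule K J hJ).V r.1) p v)) =
      Submodule.Quotient.mk (DirectSum.lof K (ZZbelow w)
        (fun r => (intervalModule K J hJ).V r.1) ⟨p.1, ZZbelow_mono h p.2⟩ v) :=
    congrArg (Submodule.Quotient.mk (p := relSub (intervalModule K J hJ) (ZZbelow w)))
      (fwd_lof (intervalModule K J hJ) (ZZbelow_mono h) p v)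
  refine Eq.trans (congrArg (phiQ K J B hJ hyp2 w) hl) ?_
  have hL : phiQ K J B hJ hyp2 w (Submodule.Quotient.mk (DirectSum.lof K (ZZbelow w)
      (fun r => (intervalModule K J hJ).V r.1) ⟨p.1, ZZbelow_mono h p.2⟩ v)) =
      pmap K (p.1 ∈ J) (w ∈ B) v := phiRaw_lof K J B hJ w ⟨p.1, ZZbelow_mono h p.2⟩ v
  have hR : phiQ K J B hJ hyp2 u (Submodule.Quotient.mk (DirectSum.lof K (ZZbelow u)
      (fun r => (intervalModule K J hJ).V r.1) p v)) =
      pmap K (p.1 ∈ J) (u ∈ B) v := phiRaw_lof K J B hJ u p v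
  refine hL.trans ?_
  refine Eq.trans ?_ (congrArg (ivMap K B u w) hR).symm
  funext hw
  by_cases hp : p.1 ∈ J
  · by_cases hu : u ∈ B
    · exact (dif_pos hp).trans ((dif_pos hu).trans (dif_pos hp)).symm
    · exfalso
      obtain ⟨p₀, q, hp₀, hp₀b, hqb, hpq, hqJ⟩ := hyp4 u hu p.1 hp p.2
      exact hqJ (hyp2 w hw.down p₀ q hp₀ (ZZbelow_mono h hqb) hpq)
  · by_cases hu : u ∈ B
    · exact (dif_neg hp).trans ((dif_pos hu).trans (dif_neg hp)).symm
    · exact (dif_neg hp).trans (show (ivMap K B u w) ((pmap K (p.1 ∈ J) (u ∈ B)) v) hw = 0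
        from dif_neg hu).symm

lemma genIso (hJ : IsConvexIn J) (hB : IsConvexIn B) (hyp1 : Hbox J) (hyp2 : Hup J B)
    (hyp3 : Hne J B) (hyp4 : Hkill J B) :
    Nonempty (PersIso (EMod (intervalModule K J hJ)) (intervalModule K B hB)) := by
  refine ⟨⟨fun u => LinearEquiv.ofLinear (phiQ K J B hJ hyp2 u) (psiQ K J B hJ hyp3 u)
    (phi_psi K J B hJ hyp2 hyp3 u) (psi_phi K J B hJ hyp1 hyp2 hyp3 hyp4 u), ?_⟩⟩
  intro u w h m
  exact LinearMap.congr_fun (phiQ_nat K J B hJ hB hyp2 hyp4 h) m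

end BlockExtMachinery

section CaseLemmas

variable {K : Type} [Field K]

lemma le_pI {x : ℝ} {p : ZZpt} (h : x ≤ (p.i : ℝ)) : (x : EReal) ≤ pI p :=
  EReal.coe_le_coe_iff.2 h
lemma lt_pI {x : ℝ} {p : ZZpt} (h : x < (p.i : ℝ)) : (x : EReal) < pI p :=
  EReal.coe_lt_coe_iff.2 h
lemma pI_le {x : ℝ} {p : ZZpt} (h : (p.i : ℝ) ≤ x) : pI p ≤ (x : EReal) :=
  EReal.coe_le_coe_iff.2 h
lemma le_pJ {x : ℝ} {p : ZZpt} (h : x ≤ (p.j : ℝ)) : (x : EReal) ≤ pJ p :=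
  EReal.coe_le_coe_iff.2 h
lemma pJ_le {x : ℝ} {p : ZZpt} (h : (p.j : ℝ) ≤ x) : pJ p ≤ (x : EReal) :=
  EReal.coe_le_coe_iff.2 h
lemma pJ_lt {x : ℝ} {p : ZZpt} (h : (p.j : ℝ) < x) : pJ p < (x : EReal) :=
  EReal.coe_lt_coe_iff.2 h
lemma pI_le' {x : ℝ} {p : ZZpt} (h : pI p ≤ (x : EReal)) : (p.i : ℝ) ≤ x :=
  EReal.coe_le_coe_iff.1 h
lemma lt_pI' {x : ℝ} {p : ZZpt} (h : (x : EReal) < pI p) : x < (p.i : ℝ) :=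
  EReal.coe_lt_coe_iff.1 h
lemma le_pJ' {x : ℝ} {p : ZZpt} (h : (x : EReal) ≤ pJ p) : x ≤ (p.j : ℝ) :=
  EReal.coe_le_coe_iff.1 h
lemma pJ_lt' {x : ℝ} {p : ZZpt} (h : pJ p < (x : EReal)) : (p.j : ℝ) < x :=
  EReal.coe_lt_coe_iff.1 h

lemma eint_le {a b : ℤ} (h : a ≤ b) : (((a : ℝ)) : EReal) ≤ (((b : ℝ)) : EReal) :=
  EReal.coe_le_coe_iff.2 (by exact_mod_cast h)
lemma eint_lt {a b : ℤ} (h : a < b) : (((a : ℝ)) : EReal) < (((b : ℝ)) : EReal) :=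
  EReal.coe_lt_coe_iff.2 (by exact_mod_cast h)

/-! Box lemmas -/

lemma hbox_zzO (β δ : EReal) : Hbox (zzO β δ) := by
  intro u p q r hp hpb hq hqb h1 h2 h3 h4
  obtain ⟨hpl, hph⟩ := hp
  obtain ⟨hql, hqh⟩ := hq
  rw [zzLtLo_iff] at hpl hql
  rw [zzLtHi_iff] at hph hqh
  refine ⟨⟨(zzLtLo_iff β r).2 ⟨hpl.1.trans (pJ_mono h3), hpl.2.trans_le (pI_mono h1)⟩,
    (zzLtHi_iff r δ).2 ⟨(pI_mono h2).trans hqh.1, (pJ_mono h4).trans_lt hqh.2⟩⟩,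
    hpb.1.trans (by exact_mod_cast h1),
    le_trans (by exact_mod_cast h4 : (r.j : ℝ) ≤ (q.j : ℝ)) hqb.2⟩

lemma hbox_zzCO (β δ : EReal) : Hbox (zzCO β δ) := by
  intro u p q r hp hpb hq hqb h1 h2 h3 h4
  obtain ⟨hpl, hph⟩ := hp
  obtain ⟨hql, hqh⟩ := hq
  rw [zzLeLo_iff] at hpl hql
  rw [zzLtHi_iff] at hph hqh
  refine ⟨⟨(zzLeLo_iff β r).2 (hpl.trans (pJ_mono h3)),
    (zzLtHi_iff r δ).2 ⟨(pI_mono h2).trans hqh.1, (pJ_mono h4).trans_lt hqh.2⟩⟩,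
    hpb.1.trans (by exact_mod_cast h1),
    le_trans (by exact_mod_cast h4 : (r.j : ℝ) ≤ (q.j : ℝ)) hqb.2⟩

lemma hbox_zzOC (β δ : EReal) : Hbox (zzOC β δ) := by
  intro u p q r hp hpb hq hqb h1 h2 h3 h4
  obtain ⟨hpl, hph⟩ := hp
  obtain ⟨hql, hqh⟩ := hq
  rw [zzLtLo_iff] at hpl hql
  rw [zzLeHi_iff] at hph hqh
  refine ⟨⟨(zzLtLo_iff β r).2 ⟨hpl.1.trans (pJ_mono h3), hpl.2.trans_le (pI_mono h1)⟩,
    (zzLeHi_iff r δ).2 ((pI_mono h2).trans hqh)⟩,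
    hpb.1.trans (by exact_mod_cast h1),
    le_trans (by exact_mod_cast h4 : (r.j : ℝ) ≤ (q.j : ℝ)) hqb.2⟩

lemma hbox_zzCC (β δ : EReal) : Hbox (zzCC β δ) := by
  intro u p q r hp hpb hq hqb h1 h2 h3 h4
  obtain ⟨hpl, hph⟩ := hp
  obtain ⟨hql, hqh⟩ := hq
  rw [zzLeLo_iff] at hpl hql
  rw [zzLeHi_iff] at hph hqh
  refine ⟨⟨(zzLeLo_iff β r).2 (hpl.trans (pJ_mono h3)),
    (zzLeHi_iff r δ).2 ((pI_mono h2).trans hqh)⟩,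
    hpb.1.trans (by exact_mod_cast h1),
    le_trans (by exact_mod_cast h4 : (r.j : ℝ) ≤ (q.j : ℝ)) hqb.2⟩

/-! Upward closure lemmas -/

lemma hup_zzO (β δ : EReal) : Hup (zzO β δ) (ublkO β δ) := by
  intro u hu p q hp hqb hpq
  obtain ⟨hpl, hph⟩ := hp
  rw [zzLtLo_iff] at hpl
  rw [zzLtHi_iff] at hph
  exact ⟨(zzLtLo_iff β q).2 ⟨hpl.1.trans (pJ_mono hpq.2), hu.1.trans_le (le_pI hqb.1)⟩,
    (zzLtHi_iff q δ).2 ⟨(pI_mono hpq.1).trans hph.1, (pJ_le hqb.2).trans_lt hu.2⟩⟩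

lemma hup_zzCO (β δ : EReal) : Hup (zzCO β δ) (ublkCO β δ) := by
  intro u hu p q hp hqb hpq
  obtain ⟨hpl, hph⟩ := hp
  rw [zzLeLo_iff] at hpl
  rw [zzLtHi_iff] at hph
  exact ⟨(zzLeLo_iff β q).2 (hpl.trans (pJ_mono hpq.2)),
    (zzLtHi_iff q δ).2 ⟨(pI_mono hpq.1).trans hph.1, (pJ_le hqb.2).trans_lt hu.2⟩⟩

lemma hup_zzOC (β δ : EReal) : Hup (zzOC β δ) (ublkOC β δ) := by
  intro u hu p q hp hqb hpq
  obtain ⟨hpl, hph⟩ := hp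
  rw [zzLtLo_iff] at hpl
  rw [zzLeHi_iff] at hph
  exact ⟨(zzLtLo_iff β q).2 ⟨hpl.1.trans (pJ_mono hpq.2), hu.1.trans_le (le_pI hqb.1)⟩,
    (zzLeHi_iff q δ).2 ((pI_mono hpq.1).trans hph)⟩

lemma hup_zzCC (β δ : EReal) : Hup (zzCC β δ) (ublkCC β δ) := by
  intro u hu p q hp hqb hpq
  obtain ⟨hpl, hph⟩ := hp
  rw [zzLeLo_iff] at hpl
  rw [zzLeHi_iff] at hph
  exact ⟨(zzLeLo_iff β q).2 (hpl.trans (pJ_mono hpq.2)),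
    (zzLeHi_iff q δ).2 ((pI_mono hpq.1).trans hph)⟩

end CaseLemmas

section NeKill

lemma x_le_ceil (u : UPos) : u.1.x ≤ ((⌈u.1.x⌉ : ℤ) : ℝ) := Int.le_ceil _

lemma ceil_sub_one_le_y (u : UPos) : ((⌈u.1.x⌉ - 1 : ℤ) : ℝ) ≤ u.1.y := by
  have h1 := Int.ceil_lt_add_one u.1.x
  have h2 := u.2
  push_cast
  linarith

lemma hne_zzO (β δ : WithBot (WithTop ℤ)) :
    Hne (zzO (ez β) (ez δ)) (ublkO (ez β) (ez δ)) := by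
  intro u hu
  obtain ⟨hu1, hu2⟩ := hu
  refine ⟨⟨⌈u.1.x⌉, ⌈u.1.x⌉ - 1, Or.inr rfl⟩, ⟨(zzLtLo_iff _ _).2 ⟨?_, ?_⟩,
    (zzLtHi_iff _ _).2 ⟨?_, ?_⟩⟩, x_le_ceil u, ceil_sub_one_le_y u⟩
  · rcases β with _ | β
    · exact bot_le
    rcases β with _ | b
    · exact absurd hu1 not_top_lt
    · have hbx : (b : ℝ) < u.1.x := EReal.coe_lt_coe_iff.1 hu1
      have h1 : b < ⌈u.1.x⌉ := by exact_mod_cast hbx.trans_le (Int.le_ceil _)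
      exact le_pJ (by exact_mod_cast (by omega : b ≤ ⌈u.1.x⌉ - 1))
  · rcases β with _ | β
    · exact EReal.bot_lt_coe _
    rcases β with _ | b
    · exact absurd hu1 not_top_lt
    · have hbx : (b : ℝ) < u.1.x := EReal.coe_lt_coe_iff.1 hu1
      exact lt_pI (hbx.trans_le (Int.le_ceil _))
  · rcases δ with _ | δ
    · exact absurd hu2 not_lt_bot
    rcases δ with _ | d
    · exact le_top
    · have hyd : u.1.y < (d : ℝ) := EReal.coe_lt_coe_iff.1 hu2
      exact pI_le (by exact_mod_cast Int.ceil_le.2 (u.2.trans hyd.le))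
  · rcases δ with _ | δ
    · exact absurd hu2 not_lt_bot
    rcases δ with _ | d
    · exact EReal.coe_lt_top _
    · have hyd : u.1.y < (d : ℝ) := EReal.coe_lt_coe_iff.1 hu2
      have h1 : ⌈u.1.x⌉ ≤ d := Int.ceil_le.2 (u.2.trans hyd.le)
      exact pJ_lt (by exact_mod_cast (by omega : ⌈u.1.x⌉ - 1 < d))

lemma hne_zzCO (b : ℤ) (δ : WithBot (WithTop ℤ)) :
    Hne (zzCO ((b : ℝ) : EReal) (ez δ)) (ublkCO ((b : ℝ) : EReal) (ez δ)) := by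
  intro u hu
  obtain ⟨hu1, hu2⟩ := hu
  have hby : (b : ℝ) ≤ u.1.y := EReal.coe_le_coe_iff.1 hu1
  have him : ⌈u.1.x⌉ ≤ max ⌈u.1.x⌉ (b + 1) := le_max_left _ _
  have hib : b + 1 ≤ max ⌈u.1.x⌉ (b + 1) := le_max_right _ _
  refine ⟨⟨max ⌈u.1.x⌉ (b + 1), max ⌈u.1.x⌉ (b + 1) - 1, Or.inr rfl⟩,
    ⟨(zzLeLo_iff _ _).2 (le_pJ (by exact_mod_cast (by omega : b ≤ max ⌈u.1.x⌉ (b + 1) - 1))),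
     (zzLtHi_iff _ _).2 ⟨?_, ?_⟩⟩, ?_, ?_⟩
  · rcases δ with _ | δ
    · exact absurd hu2 not_lt_bot
    rcases δ with _ | d
    · exact le_top
    · have hyd : u.1.y < (d : ℝ) := EReal.coe_lt_coe_iff.1 hu2
      have h1 : ⌈u.1.x⌉ ≤ d := Int.ceil_le.2 (u.2.trans hyd.le)
      have h2 : b < d := by exact_mod_cast hby.trans_lt hyd
      exact pI_le (by exact_mod_cast (by omega : max ⌈u.1.x⌉ (b + 1) ≤ d))
  · rcases δ with _ | δ
    · exact absurd hu2 not_lt_bot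
    rcases δ with _ | d
    · exact EReal.coe_lt_top _
    · have hyd : u.1.y < (d : ℝ) := EReal.coe_lt_coe_iff.1 hu2
      have h1 : ⌈u.1.x⌉ ≤ d := Int.ceil_le.2 (u.2.trans hyd.le)
      have h2 : b < d := by exact_mod_cast hby.trans_lt hyd
      exact pJ_lt (by exact_mod_cast (by omega : max ⌈u.1.x⌉ (b + 1) - 1 < d))
  · exact (x_le_ceil u).trans (by exact_mod_cast him)
  · rcases max_cases ⌈u.1.x⌉ (b + 1) with ⟨he, _⟩ | ⟨he, _⟩ <;> rw [he]
    · exact ceil_sub_one_le_y u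
    · push_cast
      linarith

lemma hne_zzOC (β : WithBot (WithTop ℤ)) (d : ℤ) :
    Hne (zzOC (ez β) ((d : ℝ) : EReal)) (ublkOC (ez β) ((d : ℝ) : EReal)) := by
  intro u hu
  obtain ⟨hu1, hu2⟩ := hu
  have hxd : u.1.x ≤ (d : ℝ) := EReal.coe_le_coe_iff.1 hu2
  refine ⟨⟨⌈u.1.x⌉, ⌈u.1.x⌉ - 1, Or.inr rfl⟩, ⟨(zzLtLo_iff _ _).2 ⟨?_, ?_⟩,
    (zzLeHi_iff _ _).2 (pI_le (by exact_mod_cast Int.ceil_le.2 hxd))⟩,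
    x_le_ceil u, ceil_sub_one_le_y u⟩
  · rcases β with _ | β
    · exact bot_le
    rcases β with _ | b
    · exact absurd hu1 not_top_lt
    · have hbx : (b : ℝ) < u.1.x := EReal.coe_lt_coe_iff.1 hu1
      have h1 : b < ⌈u.1.x⌉ := by exact_mod_cast hbx.trans_le (Int.le_ceil _)
      exact le_pJ (by exact_mod_cast (by omega : b ≤ ⌈u.1.x⌉ - 1))
  · rcases β with _ | β
    · exact EReal.bot_lt_coe _
    rcases β with _ | b
    · exact absurd hu1 not_top_lt
    · have hbx : (b : ℝ) < u.1.x := EReal.coe_lt_coe_iff.1 hu1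
      exact lt_pI (hbx.trans_le (Int.le_ceil _))

lemma hne_zzCC (b d : ℤ) (hbd : b ≤ d) :
    Hne (zzCC ((b : ℝ) : EReal) ((d : ℝ) : EReal))
      (ublkCC ((b : ℝ) : EReal) ((d : ℝ) : EReal)) := by
  intro u hu
  obtain ⟨hu1, hu2⟩ := hu
  have hxd : u.1.x ≤ (d : ℝ) := EReal.coe_le_coe_iff.1 hu1
  have hby : (b : ℝ) ≤ u.1.y := EReal.coe_le_coe_iff.1 hu2
  have hcd : ⌈u.1.x⌉ ≤ d := Int.ceil_le.2 hxd
  refine ⟨⟨max ⌈u.1.x⌉ b, max b (⌈u.1.x⌉ - 1), by omega⟩,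
    ⟨(zzLeLo_iff _ _).2 (le_pJ (by exact_mod_cast le_max_left b (⌈u.1.x⌉ - 1))),
     (zzLeHi_iff _ _).2 (pI_le (by exact_mod_cast (by omega : max ⌈u.1.x⌉ b ≤ d)))⟩,
    ?_, ?_⟩
  · exact (x_le_ceil u).trans (by exact_mod_cast le_max_left ⌈u.1.x⌉ b)
  · show ((max b (⌈u.1.x⌉ - 1) : ℤ) : ℝ) ≤ u.1.y
    rcases max_cases b (⌈u.1.x⌉ - 1) with ⟨he, _⟩ | ⟨he, _⟩ <;> rw [he]
    · exact hby
    · exact ceil_sub_one_le_y u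

lemma hkill_zzO (β δ : WithBot (WithTop ℤ)) :
    Hkill (zzO (ez β) (ez δ)) (ublkO (ez β) (ez δ)) := by
  intro u hu p hp hpb
  obtain ⟨hpl, hph⟩ := hp
  rw [zzLtLo_iff] at hpl
  rw [zzLtHi_iff] at hph
  simp only [ublkO, Set.mem_setOf_eq, not_and_or, not_lt] at hu
  rcases hu with hc | hc
  · rcases β with _ | β
    · exact absurd (le_bot_iff.1 hc) (EReal.coe_ne_bot _)
    rcases β with _ | b
    · exact absurd hpl.2 not_top_lt
    · have hxb : u.1.x ≤ (b : ℝ) := EReal.coe_le_coe_iff.1 hc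
      have hbp : (b : ℝ) < (p.i : ℝ) := lt_pI' hpl.2
      have hbj : (b : ℝ) ≤ (p.j : ℝ) := le_pJ' hpl.1
      have hby : (b : ℝ) ≤ u.1.y := hbj.trans hpb.2
      have hbpi : b + 1 ≤ p.i := by exact_mod_cast hbp
      refine ⟨⟨b + 1, b, Or.inr (by omega)⟩, ⟨b, b, Or.inl rfl⟩,
        ⟨(zzLtLo_iff _ _).2 ⟨le_pJ le_rfl, lt_pI (by exact_mod_cast lt_add_one b)⟩,
         (zzLtHi_iff _ _).2 ⟨(eint_le hbpi).trans hph.1,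
           lt_of_lt_of_le (eint_lt (lt_add_one b)) ((eint_le hbpi).trans hph.1)⟩⟩,
        ⟨hxb.trans (by push_cast; linarith), hby⟩, ⟨hxb, hby⟩,
        ⟨by show (b : ℤ) ≤ b + 1; omega, le_rfl⟩,
        fun hq => absurd ((zzLtLo_iff _ _).1 hq.1).2 (lt_irrefl _)⟩
  · rcases δ with _ | δ
    · exact absurd hph.2 not_lt_bot
    rcases δ with _ | d
    · exact absurd (top_le_iff.1 hc) (EReal.coe_ne_top _)
    · have hdy : (d : ℝ) ≤ u.1.y := EReal.coe_le_coe_iff.1 hc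
      have hpd : (p.i : ℝ) ≤ (d : ℝ) := pI_le' hph.1
      have hjd : (p.j : ℝ) < (d : ℝ) := pJ_lt' hph.2
      have hxd : u.1.x ≤ (d : ℝ) := hpb.1.trans hpd
      have hjd' : p.j ≤ d - 1 := by
        have : p.j < d := by exact_mod_cast hjd
        omega
      refine ⟨⟨d, d - 1, Or.inr rfl⟩, ⟨d, d, Or.inl rfl⟩,
        ⟨(zzLtLo_iff _ _).2 ⟨hpl.1.trans (eint_le hjd'), hpl.2.trans_le (pI_le hpd)⟩,
         (zzLtHi_iff _ _).2 ⟨le_rfl, eint_lt (a := d - 1) (b := d) (by omega)⟩⟩,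
        ⟨hxd, le_trans (by push_cast; linarith) hdy⟩, ⟨hxd, hdy⟩,
        ⟨le_rfl, by show (d : ℤ) - 1 ≤ d; omega⟩,
        fun hq => absurd ((zzLtHi_iff _ _).1 hq.2).2 (lt_irrefl _)⟩

lemma hkill_zzCO (b : ℤ) (δ : WithBot (WithTop ℤ)) :
    Hkill (zzCO ((b : ℝ) : EReal) (ez δ)) (ublkCO ((b : ℝ) : EReal) (ez δ)) := by
  intro u hu p hp hpb
  obtain ⟨hpl, hph⟩ := hp
  rw [zzLeLo_iff] at hpl
  rw [zzLtHi_iff] at hph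
  simp only [ublkCO, Set.mem_setOf_eq, not_and_or, not_le, not_lt] at hu
  rcases hu with hc | hc
  · exact absurd (hpl.trans (pJ_le hpb.2)) (not_le_of_gt hc)
  · rcases δ with _ | δ
    · exact absurd hph.2 not_lt_bot
    rcases δ with _ | d
    · exact absurd (top_le_iff.1 hc) (EReal.coe_ne_top _)
    · have hdy : (d : ℝ) ≤ u.1.y := EReal.coe_le_coe_iff.1 hc
      have hpd : (p.i : ℝ) ≤ (d : ℝ) := pI_le' hph.1
      have hjd : (p.j : ℝ) < (d : ℝ) := pJ_lt' hph.2
      have hxd : u.1.x ≤ (d : ℝ) := hpb.1.trans hpd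
      have hjd' : p.j ≤ d - 1 := by
        have : p.j < d := by exact_mod_cast hjd
        omega
      refine ⟨⟨d, d - 1, Or.inr rfl⟩, ⟨d, d, Or.inl rfl⟩,
        ⟨(zzLeLo_iff _ _).2 (hpl.trans (eint_le hjd')),
         (zzLtHi_iff _ _).2 ⟨le_rfl, eint_lt (a := d - 1) (b := d) (by omega)⟩⟩,
        ⟨hxd, le_trans (by push_cast; linarith) hdy⟩, ⟨hxd, hdy⟩,
        ⟨le_rfl, by show (d : ℤ) - 1 ≤ d; omega⟩,
        fun hq => absurd ((zzLtHi_iff _ _).1 hq.2).2 (lt_irrefl _)⟩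

lemma hkill_zzOC (β : WithBot (WithTop ℤ)) (d : ℤ) :
    Hkill (zzOC (ez β) ((d : ℝ) : EReal)) (ublkOC (ez β) ((d : ℝ) : EReal)) := by
  intro u hu p hp hpb
  obtain ⟨hpl, hph⟩ := hp
  rw [zzLtLo_iff] at hpl
  rw [zzLeHi_iff] at hph
  simp only [ublkOC, Set.mem_setOf_eq, not_and_or, not_lt, not_le] at hu
  rcases hu with hc | hc
  · rcases β with _ | β
    · exact absurd (le_bot_iff.1 hc) (EReal.coe_ne_bot _)
    rcases β with _ | b
    · exact absurd hpl.2 not_top_lt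
    · have hxb : u.1.x ≤ (b : ℝ) := EReal.coe_le_coe_iff.1 hc
      have hbp : (b : ℝ) < (p.i : ℝ) := lt_pI' hpl.2
      have hbj : (b : ℝ) ≤ (p.j : ℝ) := le_pJ' hpl.1
      have hby : (b : ℝ) ≤ u.1.y := hbj.trans hpb.2
      have hbpi : b + 1 ≤ p.i := by exact_mod_cast hbp
      refine ⟨⟨b + 1, b, Or.inr (by omega)⟩, ⟨b, b, Or.inl rfl⟩,
        ⟨(zzLtLo_iff _ _).2 ⟨le_pJ le_rfl, lt_pI (by exact_mod_cast lt_add_one b)⟩,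
         (zzLeHi_iff _ _).2 ((eint_le hbpi).trans hph)⟩,
        ⟨hxb.trans (by push_cast; linarith), hby⟩, ⟨hxb, hby⟩,
        ⟨by show (b : ℤ) ≤ b + 1; omega, le_rfl⟩,
        fun hq => absurd ((zzLtLo_iff _ _).1 hq.1).2 (lt_irrefl _)⟩
  · exact absurd ((le_pI hpb.1).trans hph) (not_le_of_gt hc)

lemma hkill_zzCC (b d : ℤ) :
    Hkill (zzCC ((b : ℝ) : EReal) ((d : ℝ) : EReal))
      (ublkCC ((b : ℝ) : EReal) ((d : ℝ) : EReal)) := by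
  intro u hu p hp hpb
  obtain ⟨hpl, hph⟩ := hp
  rw [zzLeLo_iff] at hpl
  rw [zzLeHi_iff] at hph
  simp only [ublkCC, Set.mem_setOf_eq, not_and_or, not_le] at hu
  rcases hu with hc | hc
  · exact absurd ((le_pI hpb.1).trans hph) (not_le_of_gt hc)
  · exact absurd (hpl.trans (pJ_le hpb.2)) (not_le_of_gt hc)

end NeKill

/-- The block extension functor `E` sends zigzag interval modules to block
interval modules, matching open/closed endpoint types:
`E(I^{(b,d)_ZZ}) ≅ I^{(b,d)_BL}`, `E(I^{[b,d)_ZZ}) ≅ I^{[b,d)_BL}`,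
`E(I^{(b,d]_ZZ}) ≅ I^{(b,d]_BL}` and `E(I^{[b,d]_ZZ}) ≅ I^{[b,d]_BL}`. -/
theorem block_extension_of_interval_modules (K : Type) [Field K] :
    (∀ β δ : WithBot (WithTop ℤ), ez β < ez δ →
      Nonempty (PersIso
        (EMod (intervalModule K (zzO (ez β) (ez δ)) (zzO_convex _ _)))
        (intervalModule K (ublkO (ez β) (ez δ)) (ublkO_convex _ _)))) ∧
    (∀ (b : ℤ) (δ : WithBot (WithTop ℤ)), ((b : ℝ) : EReal) < ez δ →
      Nonempty (PersIso
        (EMod (intervalModule K (zzCO ((b : ℝ) : EReal) (ez δ)) (zzCO_convex _ _)))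
        (intervalModule K (ublkCO ((b : ℝ) : EReal) (ez δ)) (ublkCO_convex _ _)))) ∧
    (∀ (β : WithBot (WithTop ℤ)) (d : ℤ), ez β < ((d : ℝ) : EReal) →
      Nonempty (PersIso
        (EMod (intervalModule K (zzOC (ez β) ((d : ℝ) : EReal)) (zzOC_convex _ _)))
        (intervalModule K (ublkOC (ez β) ((d : ℝ) : EReal)) (ublkOC_convex _ _)))) ∧
    (∀ b d : ℤ, b ≤ d →
      Nonempty (PersIso
        (EMod (intervalModule K (zzCC ((b : ℝ) : EReal) ((d : ℝ) : EReal)) (zzCC_convex _ _)))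
        (intervalModule K (ublkCC ((b : ℝ) : EReal) ((d : ℝ) : EReal)) (ublkCC_convex _ _)))) := by
  refine ⟨fun β δ _ => genIso K _ _ (zzO_convex _ _) (ublkO_convex _ _) (hbox_zzO _ _)
      (hup_zzO _ _) (hne_zzO β δ) (hkill_zzO β δ),
    fun b δ _ => genIso K _ _ (zzCO_convex _ _) (ublkCO_convex _ _) (hbox_zzCO _ _)
      (hup_zzCO _ _) (hne_zzCO b δ) (hkill_zzCO b δ),
    fun β d _ => genIso K _ _ (zzOC_convex _ _) (ublkOC_convex _ _) (hbox_zzOC _ _)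
      (hup_zzOC _ _) (hne_zzOC β d) (hkill_zzOC β d),
    fun b d hbd => genIso K _ _ (zzCC_convex _ _) (ublkCC_convex _ _) (hbox_zzCC _ _)
      (hup_zzCC _ _) (hne_zzCC b d hbd) (hkill_zzCC b d)⟩

end PersStab
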